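/- CVaR is locally Lipschitz in the supremum distance: for CDFs $F, G$ on $[a,b]$ with $\|F - G\|_\infty \le c$ where $\alpha + c < 1$, $|C_\alpha(F) - C_\alpha(G)| \le \frac{b - F^{-1}(1-\alpha-c)}{\alpha}\,\|F - G\|_\infty$, where $C_\alpha(F) = \frac{1}{\alpha}\int_{1-\alpha}^1 F^{-1}(y)\,dy$. -/

import Mathlib

open MeasureTheory intervalIntegral

noncomputable def quantile (F : ℝ → ℝ) (y : ℝ) : ℝ := sInf {x | y ≤ F x}

lemma quantile_bddBelow {F : ℝ → ℝ} {a y : ℝ} (h0 : ∀ x, x < a → F x = 0)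
    (hy : 0 < y) : BddBelow {x | y ≤ F x} := by
  refine ⟨a, fun x hx => ?_⟩
  by_contra h
  push_neg at h
  rw [Set.mem_setOf_eq, h0 x h] at hx
  linarith

lemma quantile_nonempty {F : ℝ → ℝ} {b y : ℝ} (h1 : ∀ x, b ≤ x → F x = 1)
    (hy : y ≤ 1) : Set.Nonempty {x | y ≤ F x} :=
  ⟨b, by simp [Set.mem_setOf_eq, h1 b le_rfl, hy]⟩

lemma quantile_le_b {F : ℝ → ℝ} {a b y : ℝ} (h0 : ∀ x, x < a → F x = 0)
    (h1 : ∀ x, b ≤ x → F x = 1) (hy0 : 0 < y) (hy1 : y ≤ 1) :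
    quantile F y ≤ b :=
  csInf_le (quantile_bddBelow h0 hy0) (by simp [Set.mem_setOf_eq, h1 b le_rfl, hy1])

lemma quantile_shift {F G : ℝ → ℝ} {a b y d : ℝ} (h0 : ∀ x, x < a → F x = 0)
    (h1 : ∀ x, b ≤ x → G x = 1) (hFG : ∀ x, G x ≤ F x + d)
    (hy0 : 0 < y - d) (hy1 : y ≤ 1) :
    quantile F (y - d) ≤ quantile G y := by
  apply csInf_le_csInf (quantile_bddBelow h0 hy0) (quantile_nonempty h1 hy1)
  intro x hx
  simp only [Set.mem_setOf_eq] at *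
  have := hFG x
  linarith

lemma quantile_mono {F : ℝ → ℝ} {a b : ℝ} (h0 : ∀ x, x < a → F x = 0)
    (h1 : ∀ x, b ≤ x → F x = 1) {y₁ y₂ : ℝ} (hy0 : 0 < y₁) (hy1 : y₂ ≤ 1)
    (h : y₁ ≤ y₂) : quantile F y₁ ≤ quantile F y₂ := by
  have h2 := quantile_shift (G := F) (d := y₂ - y₁) h0 h1 (fun x => by linarith)
    (by linarith) hy1
  have h3 : y₂ - (y₂ - y₁) = y₁ := by ring
  rwa [h3] at h2

lemma quantile_integrable {F : ℝ → ℝ} {a b u v : ℝ} (h0 : ∀ x, x < a → F x = 0)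
    (h1 : ∀ x, b ≤ x → F x = 1) (hu : 0 < u) (huv : u ≤ v) (hv : v ≤ 1) :
    IntervalIntegrable (quantile F) MeasureTheory.volume u v := by
  apply MonotoneOn.intervalIntegrable
  intro y₁ hy₁ y₂ hy₂ h
  rw [Set.uIcc_of_le huv] at hy₁ hy₂
  exact quantile_mono h0 h1 (lt_of_lt_of_le hu hy₁.1) (le_trans hy₂.2 hv) h

theorem stmt_15 (a b α c : ℝ) (hab : a < b) (hα : α ∈ Set.Ioo (0:ℝ) 1)
    (hc : 0 < c) (hαc : α + c < 1)
    (F G : ℝ → ℝ)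
    (hFmono : Monotone F) (hF0 : ∀ x, x < a → F x = 0) (hF1 : ∀ x, b ≤ x → F x = 1)
    (hGmono : Monotone G) (hG0 : ∀ x, x < a → G x = 0) (hG1 : ∀ x, b ≤ x → G x = 1)
    (hdist : ∀ x, |F x - G x| ≤ c) :
    |(1 / α) * (∫ y in (1 - α)..1, quantile F y) -
        (1 / α) * ∫ y in (1 - α)..1, quantile G y| ≤
      ((b - quantile F (1 - α - c)) / α) * ⨆ x : ℝ, |F x - G x| := by
  obtain ⟨hα0, hα1⟩ := hα
  set D := ⨆ x : ℝ, |F x - G x| with hD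
  have hbdd : BddAbove (Set.range fun x => |F x - G x|) :=
    ⟨c, by rintro _ ⟨x, rfl⟩; exact hdist x⟩
  have hDc : D ≤ c := ciSup_le hdist
  have hD0 : 0 ≤ D := le_trans (abs_nonneg _) (le_ciSup hbdd 0)
  have hFGD : ∀ x, G x ≤ F x + D := fun x => by
    have h := le_ciSup hbdd x
    have := abs_le.mp h
    linarith [this.1]
  have hGFD : ∀ x, F x ≤ G x + D := fun x => by
    have h := le_ciSup hbdd x
    have := abs_le.mp h
    linarith [this.2]
  -- main claim, applied symmetrically
  have main : ∀ F G : ℝ → ℝ, (∀ x, x < a → F x = 0) → (∀ x, b ≤ x → F x = 1) →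
      (∀ x, x < a → G x = 0) → (∀ x, b ≤ x → G x = 1) →
      (∀ x, G x ≤ F x + D) → (∀ x, F x ≤ G x + D) →
      (∫ y in (1-α)..1, quantile G y) - (∫ y in (1-α)..1, quantile F y)
        ≤ D * (b - quantile F (1-α)) := by
    intro F G hF0 hF1 hG0 hG1 hFGD hGFD
    have hqFb : quantile F (1-α) ≤ b := quantile_le_b hF0 hF1 (by linarith) (by linarith)
    by_cases hDα : D ≤ α
    · -- split integrals
      have i1 : IntervalIntegrable (quantile G) volume (1-α) (1-D) :=
        quantile_integrable hG0 hG1 (by linarith) (by linarith) (by linarith)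
      have i2 : IntervalIntegrable (quantile G) volume (1-D) 1 :=
        quantile_integrable hG0 hG1 (by linarith) (by linarith) le_rfl
      have i3 : IntervalIntegrable (quantile F) volume (1-α) (1-α+D) :=
        quantile_integrable hF0 hF1 (by linarith) (by linarith) (by linarith)
      have i4 : IntervalIntegrable (quantile F) volume (1-α+D) 1 :=
        quantile_integrable hF0 hF1 (by linarith) (by linarith) le_rfl
      have i5 : IntervalIntegrable (fun y => quantile F (y + D)) volume (1-α) (1-D) := by
        apply MonotoneOn.intervalIntegrable
        intro y₁ hy₁ y₂ hy₂ h
        rw [Set.uIcc_of_le (by linarith : (1:ℝ)-α ≤ 1-D)] at hy₁ hy₂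
        exact quantile_mono hF0 hF1 (by have := hy₁.1; linarith)
          (by have := hy₂.2; linarith) (by linarith)
      have splitG : (∫ y in (1-α)..1, quantile G y)
          = (∫ y in (1-α)..(1-D), quantile G y) + ∫ y in (1-D)..1, quantile G y :=
        (integral_add_adjacent_intervals i1 i2).symm
      have splitF : (∫ y in (1-α)..1, quantile F y)
          = (∫ y in (1-α)..(1-α+D), quantile F y) + ∫ y in (1-α+D)..1, quantile F y :=
        (integral_add_adjacent_intervals i3 i4).symm
      have stepA : (∫ y in (1-α)..(1-D), quantile G y)
          ≤ ∫ y in (1-α)..(1-D), quantile F (y + D) := by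
        apply integral_mono_on (by linarith) i1 i5
        intro y hy
        have hy1 := hy.1; have hy2 := hy.2
        have := quantile_shift (F := G) (G := F) (y := y + D) (d := D) hG0 hF1 hGFD
          (by linarith) (by linarith)
        simpa using this
      have stepA' : (∫ y in (1-α)..(1-D), quantile F (y + D))
          = ∫ y in (1-α+D)..1, quantile F y := by
        rw [integral_comp_add_right]
        congr 1
        ring
      have stepB : (∫ y in (1-D)..1, quantile G y) ≤ D * b := by
        have h := integral_mono_on (a := 1-D) (b := 1) (by linarith) i2
          (intervalIntegrable_const (c := b))
          (fun y hy => quantile_le_b hG0 hG1 (by have := hy.1; linarith) hy.2)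
        rw [intervalIntegral.integral_const] at h
        have : (1 - (1 - D)) • b = D * b := by rw [smul_eq_mul]; ring
        linarith [this ▸ h]
      have stepC : D * quantile F (1-α) ≤ ∫ y in (1-α)..(1-α+D), quantile F y := by
        have h := integral_mono_on (a := 1-α) (b := 1-α+D) (by linarith)
          (intervalIntegrable_const (c := quantile F (1-α))) i3
          (fun y hy => quantile_mono hF0 hF1 (by linarith) (by have := hy.2; linarith) hy.1)
        rw [intervalIntegral.integral_const] at h
        have : (1 - α + D - (1 - α)) • quantile F (1-α) = D * quantile F (1-α) := by
          rw [smul_eq_mul]; ring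
        linarith [this ▸ h]
      have hexp : D * (b - quantile F (1-α)) = D * b - D * quantile F (1-α) := by ring
      rw [splitG, splitF, hexp]
      linarith [stepA' ▸ stepA]
    · push_neg at hDα
      have iG : IntervalIntegrable (quantile G) volume (1-α) 1 :=
        quantile_integrable hG0 hG1 (by linarith) (by linarith) le_rfl
      have iF : IntervalIntegrable (quantile F) volume (1-α) 1 :=
        quantile_integrable hF0 hF1 (by linarith) (by linarith) le_rfl
      have hG : (∫ y in (1-α)..1, quantile G y) ≤ α * b := by
        have h := integral_mono_on (a := 1-α) (b := 1) (by linarith) iG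
          (intervalIntegrable_const (c := b))
          (fun y hy => quantile_le_b hG0 hG1 (by have := hy.1; linarith) hy.2)
        rw [intervalIntegral.integral_const] at h
        have : (1 - (1 - α)) • b = α * b := by rw [smul_eq_mul]; ring
        linarith [this ▸ h]
      have hF : α * quantile F (1-α) ≤ ∫ y in (1-α)..1, quantile F y := by
        have h := integral_mono_on (a := 1-α) (b := 1) (by linarith)
          (intervalIntegrable_const (c := quantile F (1-α))) iF
          (fun y hy => quantile_mono hF0 hF1 (by linarith) hy.2 hy.1)
        rw [intervalIntegral.integral_const] at h
        have : (1 - (1 - α)) • quantile F (1-α) = α * quantile F (1-α) := by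
          rw [smul_eq_mul]; ring
        linarith [this ▸ h]
      nlinarith [hqFb]
  have h1 := main F G hF0 hF1 hG0 hG1 hFGD hGFD
  have h2 := main G F hG0 hG1 hF0 hF1 hGFD hFGD
  have hq1 : quantile F (1-α-c) ≤ quantile F (1-α) :=
    quantile_mono hF0 hF1 (by linarith) (by linarith) (by linarith)
  have hq2 : quantile F (1-α-c) ≤ quantile G (1-α) := by
    have := quantile_shift (F := F) (G := G) (y := 1-α) (d := c) hF0 hG1
      (fun x => by have := abs_le.mp (hdist x); linarith [this.1]) (by linarith) (by linarith)
    exact this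
  have hqb : quantile F (1-α-c) ≤ b := quantile_le_b hF0 hF1 (by linarith) (by linarith)
  have habs : |(∫ y in (1-α)..1, quantile F y) - ∫ y in (1-α)..1, quantile G y|
      ≤ D * (b - quantile F (1-α-c)) := by
    rw [abs_sub_le_iff]
    constructor
    · nlinarith [h2, hq2, hD0]
    · nlinarith [h1, hq1, hD0]
  rw [← mul_sub, abs_mul, abs_of_pos (by positivity : (0:ℝ) < 1/α)]
  calc (1/α) * |(∫ y in (1-α)..1, quantile F y) - ∫ y in (1-α)..1, quantile G y|
      ≤ (1/α) * (D * (b - quantile F (1-α-c))) :=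
        mul_le_mul_of_nonneg_left habs (by positivity)
    _ = ((b - quantile F (1-α-c)) / α) * D := by ring
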